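/- Let F, g : ℝ → ℝ be continuous with g(x) > 0 for x > 0, and let t ↦ (x(t), y(t)) be a solution of the Lienard system ẋ = y − F(x), ẏ = −g(x) on [t₀, t₁] such that x(t) > 0 and F(x(t)) ≥ 0 for all t ∈ [t₀, t₁]. Then the integral of F along the arc satisfies ∫_{t₀}^{t₁} F(x(t)) y'(t) dt = −∫_{t₀}^{t₁} F(x(t)) g(x(t)) dt ≤ 0; equivalently, v(x(t₁), y(t₁)) ≤ v(x(t₀), y(t₀)). -/

import Mathlib

open Set Filter

/-- Along a solution arc with `x > 0` and `F(x) ≥ 0`, the integral `∫ F dy` is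
nonpositive; equivalently the energy `v = G(x) + y²/2` does not increase. -/
theorem lienard_energy_decreases (F g : ℝ → ℝ)
    (hF : Continuous F) (hg : Continuous g)
    (hgpos : ∀ x : ℝ, 0 < x → 0 < g x)
    (t₀ t₁ : ℝ) (ht : t₀ ≤ t₁) (x y : ℝ → ℝ)
    (hx : ∀ t ∈ Set.Icc t₀ t₁, HasDerivWithinAt x (y t - F (x t)) (Set.Icc t₀ t₁) t)
    (hy : ∀ t ∈ Set.Icc t₀ t₁, HasDerivWithinAt y (-(g (x t))) (Set.Icc t₀ t₁) t)
    (hxpos : ∀ t ∈ Set.Icc t₀ t₁, 0 < x t)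
    (hFnonneg : ∀ t ∈ Set.Icc t₀ t₁, 0 ≤ F (x t)) :
    (∫ t in t₀..t₁, F (x t) * (-(g (x t)))) = -∫ t in t₀..t₁, F (x t) * g (x t) ∧
    (-∫ t in t₀..t₁, F (x t) * g (x t)) ≤ 0 ∧
    (∫ u in (0:ℝ)..x t₁, g u) + (y t₁) ^ 2 / 2
      ≤ (∫ u in (0:ℝ)..x t₀, g u) + (y t₀) ^ 2 / 2 := by
  refine ⟨by simp [mul_neg, intervalIntegral.integral_neg], ?_, ?_⟩
  · have h0 : 0 ≤ ∫ t in t₀..t₁, F (x t) * g (x t) := by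
      apply intervalIntegral.integral_nonneg ht
      intro u hu
      exact mul_nonneg (hFnonneg u hu) (le_of_lt (hgpos _ (hxpos u hu)))
    linarith
  · set V : ℝ → ℝ := fun t => (∫ u in (0:ℝ)..x t, g u) + (y t) ^ 2 / 2 with hV
    have hG : ∀ u : ℝ, HasDerivAt (fun v => ∫ s in (0:ℝ)..v, g s) (g u) u := by
      intro u
      exact intervalIntegral.integral_hasDerivAt_right (hg.intervalIntegrable _ _)
        (hg.stronglyMeasurableAtFilter _ _) hg.continuousAt
    have hVderiv : ∀ t ∈ Set.Icc t₀ t₁,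
        HasDerivWithinAt V (-(F (x t) * g (x t))) (Set.Icc t₀ t₁) t := by
      intro t htm
      have h1 : HasDerivWithinAt (fun s => ∫ u in (0:ℝ)..x s, g u)
          (g (x t) * (y t - F (x t))) (Set.Icc t₀ t₁) t :=
        (hG (x t)).comp_hasDerivWithinAt t (hx t htm)
      have h2 : HasDerivWithinAt (fun s => (y s) ^ 2 / 2)
          ((2 * y t ^ 1 * -(g (x t))) / 2) (Set.Icc t₀ t₁) t :=
        ((hy t htm).pow 2).div_const 2
      have := h1.add h2
      exact this.congr_deriv (by ring)
    have hcont : ContinuousOn V (Set.Icc t₀ t₁) := fun t htm =>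
      (hVderiv t htm).continuousWithinAt
    have hanti : AntitoneOn V (Set.Icc t₀ t₁) := by
      apply antitoneOn_of_deriv_nonpos (convex_Icc t₀ t₁) hcont
      · intro t htm
        rw [interior_Icc] at htm
        exact ((hVderiv t (Set.mem_Icc_of_Ioo htm)).hasDerivAt
          (Icc_mem_nhds htm.1 htm.2)).differentiableAt.differentiableWithinAt
      · intro t htm
        rw [interior_Icc] at htm
        have hd := (hVderiv t (Set.mem_Icc_of_Ioo htm)).hasDerivAt
          (Icc_mem_nhds htm.1 htm.2)
        rw [hd.deriv]
        have := mul_nonneg (hFnonneg t (Set.mem_Icc_of_Ioo htm))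
          (le_of_lt (hgpos _ (hxpos t (Set.mem_Icc_of_Ioo htm))))
        linarith
    exact hanti (Set.left_mem_Icc.mpr ht) (Set.right_mem_Icc.mpr ht) ht
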